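/- Over 𝔽₂ (or ℤ with the signed version), the matrices L and M as above satisfy L · D_a · M = D_a as n×n matrices for every n, where D_a is the diagonal matrix with diagonal entries 1, -1, 1, -1, ...; equivalently over ℤ: Σ_k (binom(2i+1, i-k) mod 2)·(-1)^k·(binom(k+j, 2j) mod 2) = (-1)^i·δ_{i,j} for all 0 ≤ i, j. -/
import Mathlib

private def tterm (i j k : ℕ) : ℤ :=
  (((2 * i + 1).choose (i - k) % 2 : ℕ) : ℤ) * (-1) ^ k *
    (((k + j).choose (2 * j) % 2 : ℕ) : ℤ)

private lemma lucas2 (n k : ℕ) :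
    n.choose k % 2 = ((n % 2).choose (k % 2) * ((n / 2).choose (k / 2))) % 2 :=
  Choose.choose_modEq_choose_mod_mul_choose_div_nat (p := 2)

private lemma npow_even (x : ℕ) (h : x % 2 = 0) : (-1 : ℤ) ^ x = 1 :=
  Even.neg_one_pow (Nat.even_iff.mpr h)

private lemma npow_odd (x : ℕ) (h : x % 2 = 1) : (-1 : ℤ) ^ x = -1 :=
  Odd.neg_one_pow (Nat.odd_iff.mpr h)

/-- top odd -/
private lemma lemA (a m : ℕ) : (2 * a + 1).choose m % 2 = a.choose (m / 2) % 2 := by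
  have h := lucas2 (2 * a + 1) m
  rw [show (2 * a + 1) % 2 = 1 by omega, show (2 * a + 1) / 2 = a by omega] at h
  rcases Nat.mod_two_eq_zero_or_one m with hm | hm <;> rw [hm] at h <;> simpa using h

/-- top even -/
private lemma lemB (a m : ℕ) :
    (2 * a).choose m % 2 = if m % 2 = 0 then a.choose (m / 2) % 2 else 0 := by
  have h := lucas2 (2 * a) m
  rw [show (2 * a) % 2 = 0 by omega, show (2 * a) / 2 = a by omega] at h
  rcases Nat.mod_two_eq_zero_or_one m with hm | hm <;> rw [hm] at h <;> simp [hm] <;>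
    simpa using h

/-- bottom even -/
private lemma lemC (n b : ℕ) : n.choose (2 * b) % 2 = (n / 2).choose b % 2 := by
  have h := lucas2 n (2 * b)
  rw [show (2 * b) % 2 = 0 by omega, show (2 * b) / 2 = b by omega] at h
  rcases Nat.mod_two_eq_zero_or_one n with hn | hn <;> rw [hn] at h <;> simpa using h

/-- bottom odd -/
private lemma lemD (n b : ℕ) :
    n.choose (2 * b + 1) % 2 = if n % 2 = 1 then (n / 2).choose b % 2 else 0 := by
  have h := lucas2 n (2 * b + 1)
  rw [show (2 * b + 1) % 2 = 1 by omega, show (2 * b + 1) / 2 = b by omega] at h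
  rcases Nat.mod_two_eq_zero_or_one n with hn | hn <;> rw [hn] at h <;> simp [hn] <;>
    simpa using h

private lemma sum_pair (n : ℕ) (h : ℕ → ℤ) :
    ∑ k ∈ Finset.range (2 * n), h k =
      ∑ m ∈ Finset.range n, (h (2 * m) + h (2 * m + 1)) := by
  induction n with
  | zero => simp
  | succ n ih =>
      rw [Finset.sum_range_succ, ← ih, show 2 * (n + 1) = 2 * n + 1 + 1 by ring,
        Finset.sum_range_succ, Finset.sum_range_succ]
      ring

/-- i odd, j even : pairs cancel -/
private lemma pair_oe (a b m : ℕ) (hm : m ≤ a) :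
    tterm (2 * a + 1) (2 * b) (2 * m) + tterm (2 * a + 1) (2 * b) (2 * m + 1) = 0 := by
  unfold tterm
  rw [show (2 * a + 1) - 2 * m = 2 * (a - m) + 1 by omega,
      show (2 * a + 1) - (2 * m + 1) = 2 * (a - m) by omega]
  rw [lemA (2 * a + 1) (2 * (a - m) + 1), lemA (2 * a + 1) (2 * (a - m))]
  rw [show (2 * (a - m) + 1) / 2 = a - m by omega, show (2 * (a - m)) / 2 = a - m by omega]
  rw [lemC (2 * m + 2 * b) (2 * b), lemC (2 * m + 1 + 2 * b) (2 * b)]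
  rw [show (2 * m + 2 * b) / 2 = m + b by omega, show (2 * m + 1 + 2 * b) / 2 = m + b by omega]
  rw [npow_even (2 * m) (by omega), npow_odd (2 * m + 1) (by omega)]
  ring

/-- i even, j odd : pairs (2m+1, 2m+2) cancel -/
private lemma pair_eo (a b m : ℕ) (hm : m + 1 ≤ a) :
    tterm (2 * a) (2 * b + 1) (2 * m + 1) + tterm (2 * a) (2 * b + 1) (2 * m + 2) = 0 := by
  unfold tterm
  rw [show (2 * a) - (2 * m + 1) = 2 * (a - m - 1) + 1 by omega,
      show (2 * a) - (2 * m + 2) = 2 * (a - m - 1) by omega]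
  rw [lemA (2 * a) (2 * (a - m - 1) + 1), lemA (2 * a) (2 * (a - m - 1))]
  rw [show (2 * (a - m - 1) + 1) / 2 = a - m - 1 by omega,
      show (2 * (a - m - 1)) / 2 = a - m - 1 by omega]
  rw [lemC (2 * m + 1 + (2 * b + 1)) (2 * b + 1), lemC (2 * m + 2 + (2 * b + 1)) (2 * b + 1)]
  rw [show (2 * m + 1 + (2 * b + 1)) / 2 = m + b + 1 by omega,
      show (2 * m + 2 + (2 * b + 1)) / 2 = m + b + 1 by omega]
  rw [npow_odd (2 * m + 1) (by omega), npow_even (2 * m + 2) (by omega)]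
  ring

/-- i even, j even : pair reduces -/
private lemma pair_ee (a b m : ℕ) (hm : m + 1 ≤ a) :
    tterm (2 * a) (2 * b) (2 * m) + tterm (2 * a) (2 * b) (2 * m + 1) =
      (-1) ^ a * tterm a b m := by
  unfold tterm
  rw [show (2 * a) - 2 * m = 2 * (a - m) by omega,
      show (2 * a) - (2 * m + 1) = 2 * (a - m - 1) + 1 by omega]
  rw [lemA (2 * a) (2 * (a - m)), lemA (2 * a) (2 * (a - m - 1) + 1)]
  rw [show (2 * (a - m)) / 2 = a - m by omega,
      show (2 * (a - m - 1) + 1) / 2 = a - m - 1 by omega]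
  rw [lemB a (a - m), lemB a (a - m - 1)]
  rw [lemC (2 * m + 2 * b) (2 * b), lemC (2 * m + 1 + 2 * b) (2 * b)]
  rw [show (2 * m + 2 * b) / 2 = m + b by omega, show (2 * m + 1 + 2 * b) / 2 = m + b by omega]
  rw [lemA a (a - m)]
  rw [npow_even (2 * m) (by omega), npow_odd (2 * m + 1) (by omega)]
  rcases Nat.mod_two_eq_zero_or_one (a - m) with hp | hp
  · have hq : ¬((a - m - 1) % 2 = 0) := by omega
    rw [if_pos hp, if_neg hq]
    rcases Nat.mod_two_eq_zero_or_one a with hA | hA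
    · rw [npow_even a hA, npow_even m (by omega)]; push_cast; ring
    · rw [npow_odd a hA, npow_odd m (by omega)]; push_cast; ring
  · have hq : (a - m - 1) % 2 = 0 := by omega
    have hr : (a - m - 1) / 2 = (a - m) / 2 := by omega
    rw [if_neg (by omega), if_pos hq, hr]
    rcases Nat.mod_two_eq_zero_or_one a with hA | hA
    · rw [npow_even a hA, npow_odd m (by omega)]; push_cast; ring
    · rw [npow_odd a hA, npow_even m (by omega)]; push_cast; ring

/-- i odd, j odd : pair reduces -/
private lemma pair_oo (a b m : ℕ) (hm : m ≤ a) :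
    tterm (2 * a + 1) (2 * b + 1) (2 * m) + tterm (2 * a + 1) (2 * b + 1) (2 * m + 1) =
      (-1) * (-1) ^ b * tterm a b m := by
  unfold tterm
  rw [show (2 * a + 1) - 2 * m = 2 * (a - m) + 1 by omega,
      show (2 * a + 1) - (2 * m + 1) = 2 * (a - m) by omega]
  rw [lemA (2 * a + 1) (2 * (a - m) + 1), lemA (2 * a + 1) (2 * (a - m))]
  rw [show (2 * (a - m) + 1) / 2 = a - m by omega, show (2 * (a - m)) / 2 = a - m by omega]
  rw [lemC (2 * m + (2 * b + 1)) (2 * b + 1), lemC (2 * m + 1 + (2 * b + 1)) (2 * b + 1)]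
  rw [show (2 * m + (2 * b + 1)) / 2 = m + b by omega,
      show (2 * m + 1 + (2 * b + 1)) / 2 = m + b + 1 by omega]
  rw [lemD (m + b) b, lemD (m + b + 1) b]
  rw [lemC (m + b) b]
  rw [npow_even (2 * m) (by omega), npow_odd (2 * m + 1) (by omega)]
  rcases Nat.mod_two_eq_zero_or_one (m + b) with hp | hp
  · have hq : (m + b + 1) % 2 = 1 := by omega
    have hr : (m + b + 1) / 2 = (m + b) / 2 := by omega
    rw [if_neg (by omega), if_pos hq, hr]
    rcases Nat.mod_two_eq_zero_or_one b with hB | hB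
    · rw [npow_even b hB, npow_even m (by omega)]; push_cast; ring
    · rw [npow_odd b hB, npow_odd m (by omega)]; push_cast; ring
  · have hq : ¬((m + b + 1) % 2 = 1) := by omega
    rw [if_pos hp, if_neg hq]
    rcases Nat.mod_two_eq_zero_or_one b with hB | hB
    · rw [npow_even b hB, npow_odd m (by omega)]; push_cast; ring
    · rw [npow_odd b hB, npow_even m (by omega)]; push_cast; ring

private lemma keyT : ∀ i : ℕ, ∀ j : ℕ,
    ∑ k ∈ Finset.range (i + 1), tterm i j k = (-1) ^ i * (if i = j then 1 else 0) := by
  intro i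
  induction i using Nat.strong_induction_on with
  | _ i IH =>
    intro j
    rcases Nat.eq_zero_or_pos i with rfl | hi
    · rw [Finset.sum_range_one]
      unfold tterm
      rcases Nat.eq_zero_or_pos j with rfl | hj
      · norm_num
      · rw [if_neg (by omega), Nat.choose_eq_zero_of_lt (by omega : 0 + j < 2 * j)]
        norm_num
    rcases Nat.even_or_odd' i with ⟨a, ha | ha⟩ <;> rcases Nat.even_or_odd' j with ⟨b, hb | hb⟩
    · -- i = 2a, j = 2b, a ≥ 1
      subst ha hb
      have ha1 : 1 ≤ a := by omega
      rw [Finset.sum_range_succ, sum_pair a (tterm (2 * a) (2 * b))]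
      have hsum : ∑ m ∈ Finset.range a,
          (tterm (2 * a) (2 * b) (2 * m) + tterm (2 * a) (2 * b) (2 * m + 1)) =
          ∑ m ∈ Finset.range a, (-1) ^ a * tterm a b m := by
        refine Finset.sum_congr rfl fun m hm => ?_
        exact pair_ee a b m (Finset.mem_range.mp hm)
      have hlast : tterm (2 * a) (2 * b) (2 * a) = (-1) ^ a * tterm a b a := by
        unfold tterm
        rw [show (2 * a) - 2 * a = 0 by omega, show a - a = 0 by omega]
        rw [lemC (2 * a + 2 * b) (2 * b), show (2 * a + 2 * b) / 2 = a + b by omega]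
        simp only [Nat.choose_zero_right]
        rw [npow_even (2 * a) (by omega)]
        rcases Nat.mod_two_eq_zero_or_one a with hA | hA
        · rw [npow_even a hA]; push_cast; ring
        · rw [npow_odd a hA]; push_cast; ring
      rw [hsum, hlast, ← Finset.mul_sum, ← mul_add, ← Finset.sum_range_succ,
        IH a (by omega) b]
      rw [npow_even (2 * a) (by omega)]
      have hif : (if 2 * a = 2 * b then (1 : ℤ) else 0) = (if a = b then 1 else 0) := by
        by_cases h : a = b
        · rw [if_pos (by omega), if_pos h]
        · rw [if_neg (by omega), if_neg h]
      rw [hif]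
      rcases Nat.mod_two_eq_zero_or_one a with hA | hA
      · rw [npow_even a hA]; ring
      · rw [npow_odd a hA]; ring
    · -- i = 2a, j = 2b+1 : zero
      subst ha hb
      rw [Finset.sum_range_succ', sum_pair a]
      have h0 : tterm (2 * a) (2 * b + 1) 0 = 0 := by
        unfold tterm
        rw [Nat.choose_eq_zero_of_lt (by omega : 0 + (2 * b + 1) < 2 * (2 * b + 1))]
        norm_num
      have hsum : ∑ m ∈ Finset.range a,
          (tterm (2 * a) (2 * b + 1) (2 * m + 1) + tterm (2 * a) (2 * b + 1) (2 * m + 1 + 1)) =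
          0 := by
        refine Finset.sum_eq_zero fun m hm => ?_
        have h2 := pair_eo a b m (Finset.mem_range.mp hm)
        simpa using h2
      rw [h0, hsum, if_neg (by omega)]
      ring
    · -- i = 2a+1, j = 2b : zero
      subst ha hb
      rw [show 2 * a + 1 + 1 = 2 * (a + 1) by ring, sum_pair (a + 1)]
      rw [Finset.sum_eq_zero fun m hm => pair_oe a b m (by
        have := Finset.mem_range.mp hm; omega), if_neg (by omega)]
      ring
    · -- i = 2a+1, j = 2b+1
      subst ha hb
      rw [show 2 * a + 1 + 1 = 2 * (a + 1) by ring, sum_pair (a + 1)]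
      have hsum : ∑ m ∈ Finset.range (a + 1),
          (tterm (2 * a + 1) (2 * b + 1) (2 * m) + tterm (2 * a + 1) (2 * b + 1) (2 * m + 1)) =
          ∑ m ∈ Finset.range (a + 1), (-1) * (-1) ^ b * tterm a b m := by
        refine Finset.sum_congr rfl fun m hm => ?_
        exact pair_oo a b m (by have := Finset.mem_range.mp hm; omega)
      rw [hsum, ← Finset.mul_sum, IH a (by omega) b]
      by_cases h : a = b
      · subst h
        rw [if_pos rfl, if_pos rfl, npow_odd (2 * a + 1) (by omega)]
        rcases Nat.mod_two_eq_zero_or_one a with hA | hA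
        · rw [npow_even a hA]; ring
        · rw [npow_odd a hA]; ring
      · rw [if_neg h, if_neg (by omega)]
        ring

/-- `L · D_a · M = D_a`: for all `i, j`,
`∑_{k=j}^{i} (binom(2i+1, i-k) mod 2)·(-1)^k·(binom(k+j, 2j) mod 2) = (-1)^i δ_{i,j}`. -/
theorem L_Da_M_eq_Da (i j : ℕ) :
    ∑ k ∈ Finset.Icc j i,
        (((2 * i + 1).choose (i - k) % 2 : ℕ) : ℤ) * (-1) ^ k *
          (((k + j).choose (2 * j) % 2 : ℕ) : ℤ) =
      (-1) ^ i * (if i = j then 1 else 0) := by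
  have h : ∑ k ∈ Finset.Icc j i, tterm i j k = ∑ k ∈ Finset.range (i + 1), tterm i j k := by
    refine Finset.sum_subset (fun x hx => ?_) (fun x hx hx' => ?_)
    · simp only [Finset.mem_Icc] at hx
      exact Finset.mem_range.mpr (by omega)
    · simp only [Finset.mem_range] at hx
      simp only [Finset.mem_Icc, not_and, not_le] at hx'
      have hxj : x < j := by omega
      unfold tterm
      rw [Nat.choose_eq_zero_of_lt (by omega : x + j < 2 * j)]
      norm_num
  calc ∑ k ∈ Finset.Icc j i,
        (((2 * i + 1).choose (i - k) % 2 : ℕ) : ℤ) * (-1) ^ k *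
          (((k + j).choose (2 * j) % 2 : ℕ) : ℤ)
      = ∑ k ∈ Finset.range (i + 1), tterm i j k := h
    _ = (-1) ^ i * (if i = j then 1 else 0) := keyT i j
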